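/- Let d ≥ 2 be an integer and define U^(d)(r) := U(r) − (d−2)·∫_1^∞ U(t·r)·t^{1−d} dt for r > 0. Then U^(d) admits the closed piecewise form: for 0 < r ≤ 1, U^(d)(r) = (r^{d−2}/π)·∫_1^∞ t^{1−d}/√(t²−1) dt, and for r > 1, U^(d)(r) = (1/π)·∫_1^∞ t^{1−d}/√(r²t²−1) dt. -/

import Mathlib

open MeasureTheory Filter

/-- The limiting profile `U`. -/
noncomputable def U (r : ℝ) : ℝ :=
  if r ≤ 1 then 1 / 2 else 1 / 2 - Real.arccos (1 / r) / Real.pi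

/-- The `d`-dimensional profile `U^(d)`. -/
noncomputable def Ud (d : ℕ) (r : ℝ) : ℝ :=
  U r - ((d : ℝ) - 2) * ∫ t in Set.Ioi (1:ℝ), U (t * r) * t ^ ((1:ℝ) - d)

open Set

section Aux

lemma hasDerivAt_arccos_aux {r t : ℝ} (hr : 0 < r) (ht : 0 < t) (hrt : 1 < r * t) :
    HasDerivAt (fun t => Real.arccos (1 / (r * t)))
      (1 / (t * Real.sqrt (r ^ 2 * t ^ 2 - 1))) t := by
  have hrt0 : 0 < r * t := lt_trans one_pos hrt
  have h1 : (0:ℝ) < 1 / (r * t) := by positivity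
  have h2 : 1 / (r * t) < 1 := by rw [div_lt_one hrt0]; exact hrt
  have hsq : 1 < r ^ 2 * t ^ 2 := by nlinarith
  have hs : 0 < Real.sqrt (r ^ 2 * t ^ 2 - 1) := Real.sqrt_pos.2 (by linarith)
  have hinner : HasDerivAt (fun t : ℝ => 1 / (r * t)) (-(r / (r * t) ^ 2)) t := by
    have h' : HasDerivAt (fun t : ℝ => r * t) r t := by
      simpa using (hasDerivAt_id t).const_mul r
    have := h'.inv hrt0.ne'
    simp only [one_div]
    refine this.congr_deriv ?_
    ring
  have hcomp := (Real.hasDerivAt_arccos (by linarith) h2.ne).comp t hinner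
  refine hcomp.congr_deriv ?_
  have key : Real.sqrt (1 - (1 / (r * t)) ^ 2) = Real.sqrt (r ^ 2 * t ^ 2 - 1) / (r * t) := by
    rw [show 1 - (1 / (r * t)) ^ 2 = (r ^ 2 * t ^ 2 - 1) / (r * t) ^ 2 by field_simp,
      Real.sqrt_div (by linarith), Real.sqrt_sq hrt0.le]
  rw [key]
  field_simp

lemma tendsto_arccos_aux {r : ℝ} (hr : 0 < r) :
    Tendsto (fun t => Real.arccos (1 / (r * t))) atTop (nhds (Real.pi / 2)) := by
  have h0 : Tendsto (fun t : ℝ => r * t) atTop atTop := tendsto_id.const_mul_atTop hr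
  have h1 : Tendsto (fun t : ℝ => 1 / (r * t)) atTop (nhds 0) := by
    simp only [one_div]
    exact tendsto_inv_atTop_zero.comp h0
  have h2 := (Real.continuous_arccos.continuousAt (x := 0)).tendsto.comp h1
  simpa [Real.arccos_zero, Function.comp_def] using h2

lemma contWithin_arccos_aux {r a : ℝ} (hr : 0 < r) (ha : 0 < a) :
    ContinuousWithinAt (fun t => Real.arccos (1 / (r * t))) (Ici a) a := by
  apply ContinuousAt.continuousWithinAt
  exact Real.continuous_arccos.continuousAt.comp
    ((continuous_const.continuousAt).div
      (continuous_const.mul continuous_id).continuousAt (by positivity))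

lemma rt_gt {r a t : ℝ} (hr : 0 < r) (har : 1 ≤ r * a) (ht : t ∈ Ioi a) : 1 < r * t :=
  lt_of_le_of_lt har ((mul_lt_mul_iff_right₀ hr).2 ht)

lemma integrableOn_D {r a : ℝ} (hr : 0 < r) (ha : 0 < a) (har : 1 ≤ r * a) :
    IntegrableOn (fun t => 1 / (t * Real.sqrt (r ^ 2 * t ^ 2 - 1))) (Ioi a) := by
  refine integrableOn_Ioi_deriv_of_nonneg (contWithin_arccos_aux hr ha)
    (fun t ht => hasDerivAt_arccos_aux hr (ha.trans ht) (rt_gt hr har ht))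
    (fun t ht => ?_) (tendsto_arccos_aux hr)
  have h1 : 0 < t := ha.trans ht
  positivity

lemma integral_D {r a : ℝ} (hr : 0 < r) (ha : 0 < a) (har : 1 ≤ r * a) :
    ∫ t in Ioi a, 1 / (t * Real.sqrt (r ^ 2 * t ^ 2 - 1))
      = Real.pi / 2 - Real.arccos (1 / (r * a)) := by
  refine integral_Ioi_of_hasDerivAt_of_nonneg (contWithin_arccos_aux hr ha)
    (fun t ht => hasDerivAt_arccos_aux hr (ha.trans ht) (rt_gt hr har ht))
    (fun t ht => ?_) (tendsto_arccos_aux hr)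
  have h1 : 0 < t := ha.trans ht
  positivity

lemma measurable_arccos_aux (r : ℝ) :
    Measurable (fun t : ℝ => Real.arccos (1 / (r * t))) :=
  Real.continuous_arccos.measurable.comp
    (measurable_const.div (measurable_const.mul measurable_id'))

lemma integrableOn_tD {r a e : ℝ} (hr : 0 < r) (ha : 0 < a) (har : 1 ≤ r * a) (he : 2 < e) :
    IntegrableOn (fun t => t ^ (2 - e) * (1 / (t * Real.sqrt (r ^ 2 * t ^ 2 - 1)))) (Ioi a) := by
  refine Integrable.bdd_mul (c := a ^ (2 - e)) (integrableOn_D hr ha har) ?_ ?_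
  · exact (ContinuousOn.aestronglyMeasurable (fun t ht =>
      (Real.continuousAt_rpow_const t _ (Or.inl (ha.trans ht).ne')).continuousWithinAt)
      measurableSet_Ioi)
  · filter_upwards [ae_restrict_mem measurableSet_Ioi] with t ht
    rw [Real.norm_eq_abs, abs_of_nonneg (Real.rpow_nonneg (ha.trans ht).le _)]
    exact Real.rpow_le_rpow_of_nonpos ha (le_of_lt ht) (by linarith)

lemma integrableOn_arccos_mul {r a e : ℝ} (hr : 0 < r) (ha : 0 < a) (he : 2 < e) :
    IntegrableOn (fun t => Real.arccos (1 / (r * t)) * t ^ ((1:ℝ) - e)) (Ioi a) := by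
  refine Integrable.bdd_mul (c := Real.pi)
    (integrableOn_Ioi_rpow_of_lt (by linarith) ha)
    (measurable_arccos_aux r).aestronglyMeasurable ?_
  filter_upwards [] with t
  rw [Real.norm_eq_abs, abs_of_nonneg (Real.arccos_nonneg _)]
  exact Real.arccos_le_pi _

lemma key_integral {r a e : ℝ} (hr : 0 < r) (ha : 0 < a) (har : 1 ≤ r * a) (he : 2 < e) :
    ∫ t in Ioi a, Real.arccos (1 / (r * t)) * t ^ ((1:ℝ) - e)
      = (1 / (e - 2)) * (Real.arccos (1 / (r * a)) * a ^ ((2:ℝ) - e))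
        + (1 / (e - 2)) *
          ∫ t in Ioi a, t ^ ((2:ℝ) - e) * (1 / (t * Real.sqrt (r ^ 2 * t ^ 2 - 1))) := by
  have he2 : e - 2 ≠ 0 := by linarith
  set D : ℝ → ℝ := fun t => 1 / (t * Real.sqrt (r ^ 2 * t ^ 2 - 1)) with hD
  set F : ℝ → ℝ := fun t => -(1 / (e - 2)) * (Real.arccos (1 / (r * t)) * t ^ ((2:ℝ) - e)) with hF
  set F' : ℝ → ℝ := fun t =>
    Real.arccos (1 / (r * t)) * t ^ ((1:ℝ) - e) - (1 / (e - 2)) * (t ^ ((2:ℝ) - e) * D t) with hF'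
  have hint : IntegrableOn F' (Ioi a) :=
    (integrableOn_arccos_mul hr ha he).sub ((integrableOn_tD hr ha har he).const_mul _)
  have hderiv : ∀ t ∈ Ioi a, HasDerivAt F (F' t) t := by
    intro t ht
    have ht0 : 0 < t := ha.trans ht
    have h1 := hasDerivAt_arccos_aux hr ht0 (rt_gt hr har ht)
    have h2 : HasDerivAt (fun x : ℝ => x ^ ((2:ℝ) - e)) ((2 - e) * t ^ ((1:ℝ) - e)) t := by
      have := Real.hasDerivAt_rpow_const (x := t) (p := 2 - e) (Or.inl ht0.ne')
      convert this using 2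
      ring
    have hmul := (h1.mul h2).const_mul (-(1 / (e - 2)))
    refine hmul.congr_deriv ?_
    have hone : -(1 / (e - 2)) * (2 - e) = 1 := by field_simp; ring
    simp only [hF', hD]
    linear_combination (Real.arccos (1 / (r * t)) * t ^ ((1:ℝ) - e)) * hone
  have hcont : ContinuousWithinAt F (Ici a) a := by
    apply ContinuousAt.continuousWithinAt
    exact (continuousAt_const.mul ((Real.continuous_arccos.continuousAt.comp
      ((continuous_const.continuousAt).div
        (continuous_const.mul continuous_id).continuousAt (by positivity))).mul
      (Real.continuousAt_rpow_const a _ (Or.inl ha.ne'))))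
  have htend : Tendsto F atTop (nhds 0) := by
    have h1 : Tendsto (fun t : ℝ => t ^ ((2:ℝ) - e)) atTop (nhds 0) := by
      have := tendsto_rpow_neg_atTop (y := e - 2) (by linarith)
      simpa [show -(e-2) = 2-e by ring] using this
    have h2 := (((tendsto_arccos_aux hr).mul h1).const_mul (-(1 / (e - 2))))
    rw [hF, show (0:ℝ) = -(1 / (e - 2)) * (Real.pi / 2 * 0) by ring]
    exact h2
  have hFTC := integral_Ioi_of_hasDerivAt_of_tendsto hcont hderiv hint htend
  have hsub : ∫ t in Ioi a, F' t
      = (∫ t in Ioi a, Real.arccos (1 / (r * t)) * t ^ ((1:ℝ) - e))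
        - (1 / (e - 2)) * ∫ t in Ioi a, t ^ ((2:ℝ) - e) * D t := by
    rw [hF']
    rw [integral_sub (integrableOn_arccos_mul hr ha he)
      ((integrableOn_tD hr ha har he).const_mul _), integral_const_mul]
  rw [hsub] at hFTC
  rw [hF] at hFTC
  simp only at hFTC
  linarith [hFTC]

lemma J_eq {r a e : ℝ} (hr : 0 < r) (ha : 0 < a) (har : 1 ≤ r * a) :
    ∫ t in Ioi a, t ^ ((2:ℝ) - e) * (1 / (t * Real.sqrt (r ^ 2 * t ^ 2 - 1)))
      = ∫ t in Ioi a, t ^ ((1:ℝ) - e) / Real.sqrt (r ^ 2 * t ^ 2 - 1) := by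
  refine setIntegral_congr_fun measurableSet_Ioi (fun t ht => ?_)
  have ht0 : 0 < t := ha.trans ht
  have hrt : 1 < r * t := lt_of_le_of_lt har ((mul_lt_mul_iff_right₀ hr).2 ht)
  have hs : 0 < Real.sqrt (r ^ 2 * t ^ 2 - 1) := Real.sqrt_pos.2 (by nlinarith)
  rw [show (2:ℝ) - e = (1 - e) + 1 by ring, Real.rpow_add_one ht0.ne']
  field_simp

lemma subst_lemma {r e : ℝ} (hr : 0 < r) :
    ∫ t in Ioi (1/r), t ^ ((1:ℝ) - e) / Real.sqrt (r ^ 2 * t ^ 2 - 1)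
      = r ^ (e - 2) * ∫ t in Ioi (1:ℝ), t ^ ((1:ℝ) - e) / Real.sqrt (t ^ 2 - 1) := by
  have h1 : ∀ t ∈ Ioi (1/r), t ^ ((1:ℝ) - e) / Real.sqrt (r ^ 2 * t ^ 2 - 1)
      = r ^ (e - 1) * ((r * t) ^ ((1:ℝ) - e) / Real.sqrt ((r * t) ^ 2 - 1)) := by
    intro t ht
    have ht0 : 0 < t := lt_trans (by positivity) ht
    rw [Real.mul_rpow hr.le ht0.le, mul_pow]
    rw [show r ^ (e-1) * (r ^ ((1:ℝ)-e) * t ^ ((1:ℝ)-e) / Real.sqrt (r^2*t^2-1))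
      = (r ^ (e-1) * r ^ ((1:ℝ)-e)) * (t ^ ((1:ℝ)-e) / Real.sqrt (r^2*t^2-1)) by ring,
      ← Real.rpow_add hr, show e - 1 + (1 - e) = 0 by ring, Real.rpow_zero, one_mul]
  rw [setIntegral_congr_fun measurableSet_Ioi h1, integral_const_mul,
    integral_comp_mul_left_Ioi (fun s => s ^ ((1:ℝ) - e) / Real.sqrt (s ^ 2 - 1)) _ hr,
    mul_one_div_cancel hr.ne', smul_eq_mul, ← mul_assoc]
  congr 1
  rw [← Real.rpow_neg_one r, ← Real.rpow_add hr, show e - 1 + (-1) = e - 2 by ring]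

lemma split_le {r e : ℝ} (hr : 0 < r) (hr1 : r ≤ 1) (he : 2 < e) :
    ∫ t in Ioi (1:ℝ), U (t * r) * t ^ ((1:ℝ) - e)
      = (1/2) * (1/(e-2))
        - (1/Real.pi) * ∫ t in Ioi (1/r), Real.arccos (1 / (r * t)) * t ^ ((1:ℝ) - e) := by
  have hinv : (1:ℝ) ≤ 1/r := by rw [le_div_iff₀ hr]; simpa
  have hpt : ∀ t ∈ Ioi (1:ℝ), U (t * r) * t ^ ((1:ℝ) - e)
      = (1/2) * t ^ ((1:ℝ) - e)
        - (1/Real.pi) * (Ioi (1/r)).indicator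
            (fun t => Real.arccos (1 / (r * t)) * t ^ ((1:ℝ) - e)) t := by
    intro t ht
    by_cases h : t ≤ 1/r
    · have htr : t * r ≤ 1 := by rwa [le_div_iff₀ hr] at h
      rw [indicator_of_notMem (by simpa using h), U, if_pos htr]
      ring
    · push_neg at h
      have htr : 1 < t * r := by rwa [div_lt_iff₀ hr] at h
      rw [indicator_of_mem (mem_Ioi.2 h), U, if_neg (not_le.2 htr), mul_comm t r]
      ring
  rw [setIntegral_congr_fun measurableSet_Ioi hpt]
  have hi1 : IntegrableOn (fun t : ℝ => (1/2) * t ^ ((1:ℝ) - e)) (Ioi 1) :=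
    (integrableOn_Ioi_rpow_of_lt (by linarith) one_pos).const_mul _
  have hi2 : IntegrableOn ((Ioi (1/r)).indicator
      (fun t => Real.arccos (1 / (r * t)) * t ^ ((1:ℝ) - e))) (Ioi 1) := by
    apply Integrable.integrableOn
    rw [integrable_indicator_iff measurableSet_Ioi]
    exact integrableOn_arccos_mul hr (by positivity) he
  rw [integral_sub hi1 (hi2.const_mul _), integral_const_mul, integral_const_mul,
    setIntegral_indicator measurableSet_Ioi,
    show Ioi (1:ℝ) ∩ Ioi (1/r) = Ioi (1/r) by
      rw [Ioi_inter_Ioi, max_eq_right hinv],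
    integral_Ioi_rpow_of_lt (by linarith) one_pos]
  have hval : -(1:ℝ) ^ ((1:ℝ) - e + 1) / ((1:ℝ) - e + 1) = 1/(e-2) := by
    rw [show (1:ℝ) - e + 1 = 2 - e by ring, Real.one_rpow,
      div_eq_div_iff (sub_ne_zero.2 (by linarith)) (sub_ne_zero.2 (by linarith))]
    ring
  rw [hval]

lemma split_gt {r e : ℝ} (hr1 : 1 < r) (he : 2 < e) :
    ∫ t in Ioi (1:ℝ), U (t * r) * t ^ ((1:ℝ) - e)
      = (1/2) * (1/(e-2))
        - (1/Real.pi) * ∫ t in Ioi (1:ℝ), Real.arccos (1 / (r * t)) * t ^ ((1:ℝ) - e) := by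
  have hr : 0 < r := lt_trans one_pos hr1
  have hpt : ∀ t ∈ Ioi (1:ℝ), U (t * r) * t ^ ((1:ℝ) - e)
      = (1/2) * t ^ ((1:ℝ) - e)
        - (1/Real.pi) * (Real.arccos (1 / (r * t)) * t ^ ((1:ℝ) - e)) := by
    intro t ht
    have ht1 : 1 < t := ht
    have htr : 1 < t * r := by nlinarith
    rw [U, if_neg (not_le.2 htr), mul_comm t r]
    ring
  rw [setIntegral_congr_fun measurableSet_Ioi hpt]
  have hi1 : IntegrableOn (fun t : ℝ => (1/2) * t ^ ((1:ℝ) - e)) (Ioi 1) :=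
    (integrableOn_Ioi_rpow_of_lt (by linarith) one_pos).const_mul _
  rw [integral_sub hi1 ((integrableOn_arccos_mul hr one_pos he).const_mul _),
    integral_const_mul, integral_const_mul, integral_Ioi_rpow_of_lt (by linarith) one_pos]
  have hval : -(1:ℝ) ^ ((1:ℝ) - e + 1) / ((1:ℝ) - e + 1) = 1/(e-2) := by
    rw [show (1:ℝ) - e + 1 = 2 - e by ring, Real.one_rpow,
      div_eq_div_iff (sub_ne_zero.2 (by linarith)) (sub_ne_zero.2 (by linarith))]
    ring
  rw [hval]

lemma integral_base2 {r : ℝ} (hr1 : 1 ≤ r) :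
    ∫ t in Ioi (1:ℝ), t ^ (-1:ℝ) / Real.sqrt (r ^ 2 * t ^ 2 - 1)
      = Real.pi / 2 - Real.arccos (1 / r) := by
  have hr : 0 < r := lt_of_lt_of_le one_pos hr1
  have hc : ∀ t ∈ Ioi (1:ℝ), t ^ (-1:ℝ) / Real.sqrt (r ^ 2 * t ^ 2 - 1)
      = 1 / (t * Real.sqrt (r ^ 2 * t ^ 2 - 1)) := by
    intro t ht
    rw [Real.rpow_neg_one, div_eq_mul_inv, one_div, mul_inv]
  rw [setIntegral_congr_fun measurableSet_Ioi hc,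
    integral_D hr one_pos (by rwa [mul_one]), mul_one]

end Aux

theorem Ud_piecewise (d : ℕ) (hd : 2 ≤ d) (r : ℝ) :
    (0 < r → r ≤ 1 →
      Ud d r = (r ^ ((d : ℝ) - 2) / Real.pi) *
        ∫ t in Set.Ioi (1:ℝ), t ^ ((1:ℝ) - d) / Real.sqrt (t ^ 2 - 1)) ∧
    (1 < r →
      Ud d r = (1 / Real.pi) *
        ∫ t in Set.Ioi (1:ℝ), t ^ ((1:ℝ) - d) / Real.sqrt (r ^ 2 * t ^ 2 - 1)) := by
  have hpi := Real.pi_ne_zero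
  rcases eq_or_lt_of_le hd with h2 | h3
  · -- d = 2
    subst h2
    have hcast : ((2:ℕ):ℝ) = 2 := by norm_num
    have hUd : ∀ s : ℝ, Ud 2 s = U s := by
      intro s
      unfold Ud
      rw [hcast]
      ring
    constructor
    · intro hr0 hr1
      rw [hUd, U, if_pos hr1, hcast,
        show ((2:ℝ) - 2) = 0 by ring, Real.rpow_zero,
        show ((1:ℝ) - 2) = -1 by norm_num]
      have h1 := integral_base2 (r := 1) le_rfl
      simp only [one_pow, one_mul, one_div_one, Real.arccos_one, sub_zero] at h1
      rw [h1]
      field_simp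
    · intro hr1
      rw [hUd, U, if_neg (not_le.2 hr1),
        hcast, show ((1:ℝ) - 2) = -1 by norm_num,
        integral_base2 hr1.le, mul_sub,
        show (1/Real.pi) * (Real.pi/2) = 1/2 by field_simp,
        one_div_mul_eq_div]
  · -- d ≥ 3
    have he : (2:ℝ) < (d:ℝ) := by exact_mod_cast h3
    set e : ℝ := (d:ℝ) with hedef
    have he2 : e - 2 ≠ 0 := by dsimp [e]; intro h; nlinarith
    constructor
    · intro hr0 hr1
      have hinv : (0:ℝ) < 1/r := by positivity
      have har : (1:ℝ) ≤ r * (1/r) := by rw [mul_one_div_cancel hr0.ne']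
      have hkey := key_integral hr0 hinv har he
      rw [mul_one_div_cancel hr0.ne'] at hkey
      simp only [one_div_one, Real.arccos_one, zero_mul, mul_zero, zero_add] at hkey
      rw [J_eq hr0 hinv har, subst_lemma hr0] at hkey
      unfold Ud
      rw [split_le hr0 hr1 he, hkey, U, if_pos hr1]
      field_simp
      ring
    · intro hr1
      have hr0 : 0 < r := lt_trans one_pos hr1
      have har : (1:ℝ) ≤ r * 1 := by rw [mul_one]; exact hr1.le
      have hkey := key_integral hr0 one_pos har he
      rw [mul_one] at hkey
      rw [Real.one_rpow, mul_one] at hkey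
      rw [J_eq hr0 one_pos har] at hkey
      unfold Ud
      rw [split_gt hr1 he, hkey, U, if_neg (not_le.2 hr1)]
      field_simp
      ring
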